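/- Suppose hypothesis (H1) holds. If there exists an extended sense L^∞ (global) minimizer for (P_e) which is not isolated, then there is no infimum gap: the infimum of J_e over all feasible extended sense processes equals the infimum of J over all feasible strict sense processes. -/

import Mathlib

open Filter MeasureTheory Set Topology
open scoped Topology RealInnerProductSpace NNReal

noncomputable section

/-- `ℝ^k` with the Euclidean norm. -/
abbrev En (k : ℕ) : Type := EuclideanSpace ℝ (Fin k)

/-- The limiting normal cone of a set `D` at a point `z`, defined with respect to a
pairing `pair` (in our applications, the Euclidean inner product of the ambient space):
`N_D(z) = {p | ∃ zᵢ →_D z, pᵢ → p, limsup_{z' →_D zᵢ} pᵢ⬝(z'-zᵢ)/|z'-zᵢ| ≤ 0 for each i}`. -/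
def limNC {E : Type*} [AddCommGroup E] [TopologicalSpace E]
    (pair : E → E → ℝ) (D : Set E) (z : E) : Set E :=
  {p | ∃ zs ps : ℕ → E, (∀ i, zs i ∈ D) ∧
    Tendsto zs atTop (𝓝 z) ∧ Tendsto ps atTop (𝓝 p) ∧
    ∀ i, Filter.limsup
      (fun z' => pair (ps i) (z' - zs i) / Real.sqrt (pair (z' - zs i) (z' - zs i)))
      (𝓝[D \ {zs i}] (zs i)) ≤ 0}

/-- Euclidean pairing on `ℝ × ℝⁿ × ℝ × ℝⁿ`. -/
def pair4 {n : ℕ} (a b : ℝ × En n × ℝ × En n) : ℝ :=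
  a.1 * b.1 + ⟪a.2.1, b.2.1⟫ + a.2.2.1 * b.2.2.1 + ⟪a.2.2.2, b.2.2.2⟫

/-- Euclidean pairing on `ℝ × ℝⁿ × ℝ × ℝⁿ × ℝ`. -/
def pair5 {n : ℕ} (a b : ℝ × En n × ℝ × En n × ℝ) : ℝ :=
  a.1 * b.1 + ⟪a.2.1, b.2.1⟫ + a.2.2.1 * b.2.2.1 + ⟪a.2.2.2.1, b.2.2.2.1⟫ +
    a.2.2.2.2 * b.2.2.2.2

/-- `C` is a closed convex cone. -/
def IsClosedConvexCone {k : ℕ} (C : Set (En k)) : Prop :=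
  IsClosed C ∧ Convex ℝ C ∧ ∀ c : ℝ, 0 ≤ c → ∀ w ∈ C, c • w ∈ C

/-- Hypothesis (H1)(i): the vector fields `f, g₁, …, g_m` are `C¹` and have
sublinear growth `|f(t,x)| + Σ_j |g_j(t,x)| ≤ A|x| + B`. -/
def HypH1i {n m : ℕ} (f : ℝ × En n → En n) (g : Fin m → ℝ × En n → En n) : Prop :=
  ContDiff ℝ 1 f ∧ (∀ j, ContDiff ℝ 1 (g j)) ∧
  ∃ A B : ℝ, 0 < A ∧ 0 < B ∧
    ∀ (t : ℝ) (x : En n), ‖f (t, x)‖ + ∑ j, ‖g j (t, x)‖ ≤ A * ‖x‖ + B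

/-- Hypothesis (H1): (H1)(i) together with: `h` is `C¹` and nondecreasing in the
total-variation variable `v`. -/
def HypH1 {n m : ℕ} (f : ℝ × En n → En n) (g : Fin m → ℝ × En n → En n)
    (h : ℝ × En n × ℝ × En n × ℝ → ℝ) : Prop :=
  HypH1i f g ∧ ContDiff ℝ 1 h ∧
  ∀ (t1 : ℝ) (x1 : En n) (t2 : ℝ) (x2 : En n),
    Monotone (fun v => h (t1, x1, t2, x2, v))

/-- A strict sense process `(t₁,t₂,x,v,u)`: `x,v,u` are `W^{1,1}` on `[t₁,t₂]`
(encoded by integrable a.e. derivatives `x',v',u'` and the integral representation),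
`du/dt ∈ 𝒞` a.e., `dx/dt = f(t,x) + Σ_j g_j(t,x) du^j/dt` and `dv/dt = |du/dt|` a.e.
The functions are extended to all of `ℝ`, constant outside `[t₁,t₂]`. -/
structure StrictProcess (n m : ℕ) (C : Set (En m))
    (f : ℝ × En n → En n) (g : Fin m → ℝ × En n → En n) where
  t1 : ℝ
  t2 : ℝ
  x : ℝ → En n
  v : ℝ → ℝ
  u : ℝ → En m
  x' : ℝ → En n
  v' : ℝ → ℝ
  u' : ℝ → En m
  ht : t1 < t2
  hx'int : IntervalIntegrable x' volume t1 t2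
  hv'int : IntervalIntegrable v' volume t1 t2
  hu'int : IntervalIntegrable u' volume t1 t2
  hxac : ∀ t ∈ Icc t1 t2, x t = x t1 + ∫ τ in t1..t, x' τ
  hvac : ∀ t ∈ Icc t1 t2, v t = v t1 + ∫ τ in t1..t, v' τ
  huac : ∀ t ∈ Icc t1 t2, u t = u t1 + ∫ τ in t1..t, u' τ
  hcone : ∀ᵐ t ∂(volume : Measure ℝ), t ∈ Icc t1 t2 → u' t ∈ C
  hode : ∀ᵐ t ∂(volume : Measure ℝ), t ∈ Icc t1 t2 →
    x' t = f (t, x t) + ∑ j, u' t j • g j (t, x t)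
  hvar : ∀ᵐ t ∂(volume : Measure ℝ), t ∈ Icc t1 t2 → v' t = ‖u' t‖
  hxconstl : ∀ t ≤ t1, x t = x t1
  hxconstr : ∀ t, t2 ≤ t → x t = x t2
  hvconstl : ∀ t ≤ t1, v t = v t1
  hvconstr : ∀ t, t2 ≤ t → v t = v t2

/-- An extended sense process `(S,y⁰,y,ν,φ⁰,φ)`: Lipschitz functions on `[0,S]`
satisfying a.e. `dy⁰/ds = dφ⁰/ds`, `dy/ds = f(y⁰,y)dφ⁰/ds + Σ_j g_j(y⁰,y)dφ^j/ds`,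
`dν/ds = |dφ/ds|` and `(dφ⁰/ds, dφ/ds) ∈ 𝐂 = {(w⁰,w) ∈ ℝ₊ × 𝒞 : w⁰ + |w| = 1}`.
The state functions `y, ν` are extended to all of `ℝ`, constant outside `[0,S]`. -/
structure ExtProcess (n m : ℕ) (C : Set (En m))
    (f : ℝ × En n → En n) (g : Fin m → ℝ × En n → En n) where
  S : ℝ
  hS : 0 ≤ S
  y0 : ℝ → ℝ
  y : ℝ → En n
  nu : ℝ → ℝ
  phi0 : ℝ → ℝ
  phi : ℝ → En m
  y0' : ℝ → ℝ
  y' : ℝ → En n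
  nu' : ℝ → ℝ
  phi0' : ℝ → ℝ
  phi' : ℝ → En m
  lip : ∃ L : ℝ≥0, LipschitzOnWith L
    (fun s => (y0 s, y s, nu s, phi0 s, phi s)) (Icc 0 S)
  hy0int : IntervalIntegrable y0' volume 0 S
  hyint : IntervalIntegrable y' volume 0 S
  hnuint : IntervalIntegrable nu' volume 0 S
  hphi0int : IntervalIntegrable phi0' volume 0 S
  hphiint : IntervalIntegrable phi' volume 0 S
  hy0ac : ∀ s ∈ Icc 0 S, y0 s = y0 0 + ∫ r in (0:ℝ)..s, y0' r
  hyac : ∀ s ∈ Icc 0 S, y s = y 0 + ∫ r in (0:ℝ)..s, y' r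
  hnuac : ∀ s ∈ Icc 0 S, nu s = nu 0 + ∫ r in (0:ℝ)..s, nu' r
  hphi0ac : ∀ s ∈ Icc 0 S, phi0 s = phi0 0 + ∫ r in (0:ℝ)..s, phi0' r
  hphiac : ∀ s ∈ Icc 0 S, phi s = phi 0 + ∫ r in (0:ℝ)..s, phi' r
  heqy0 : ∀ᵐ s ∂(volume : Measure ℝ), s ∈ Icc 0 S → y0' s = phi0' s
  heqy : ∀ᵐ s ∂(volume : Measure ℝ), s ∈ Icc 0 S →
    y' s = phi0' s • f (y0 s, y s) + ∑ j, phi' s j • g j (y0 s, y s)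
  heqnu : ∀ᵐ s ∂(volume : Measure ℝ), s ∈ Icc 0 S → nu' s = ‖phi' s‖
  hcone : ∀ᵐ s ∂(volume : Measure ℝ), s ∈ Icc 0 S →
    0 ≤ phi0' s ∧ phi' s ∈ C ∧ phi0' s + ‖phi' s‖ = 1
  hyconstl : ∀ s ≤ (0:ℝ), y s = y 0
  hyconstr : ∀ s, S ≤ s → y s = y S
  hnuconstl : ∀ s ≤ (0:ℝ), nu s = nu 0
  hnuconstr : ∀ s, S ≤ s → nu s = nu S

variable {n m : ℕ} {C : Set (En m)}
  {f : ℝ × En n → En n} {g : Fin m → ℝ × En n → En n}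

/-- Feasibility of a strict sense process: `v(t₁)=0`, `v(t₂) ≤ K`,
`(t₁,x(t₁),t₂,x(t₂)) ∈ 𝒯`. -/
def StrictFeasible (K : EReal) (T : Set (ℝ × En n × ℝ × En n))
    (P : StrictProcess n m C f g) : Prop :=
  P.v P.t1 = 0 ∧ (P.v P.t2 : EReal) ≤ K ∧ (P.t1, P.x P.t1, P.t2, P.x P.t2) ∈ T

/-- Feasibility of an extended sense process: `ν(0)=0`, `ν(S) ≤ K`,
`(y⁰(0),y(0),y⁰(S),y(S)) ∈ 𝒯`. -/
def ExtFeasible (K : EReal) (T : Set (ℝ × En n × ℝ × En n))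
    (Q : ExtProcess n m C f g) : Prop :=
  Q.nu 0 = 0 ∧ (Q.nu Q.S : EReal) ≤ K ∧ (Q.y0 0, Q.y 0, Q.y0 Q.S, Q.y Q.S) ∈ T

/-- The cost of a strict sense process. -/
def Jstrict (h : ℝ × En n × ℝ × En n × ℝ → ℝ) (P : StrictProcess n m C f g) : ℝ :=
  h (P.t1, P.x P.t1, P.t2, P.x P.t2, P.v P.t2)

/-- The endpoint data `(y⁰(0),y(0),y⁰(S),y(S),ν(S))` of an extended process. -/
def endptExt (Q : ExtProcess n m C f g) : ℝ × En n × ℝ × En n × ℝ :=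
  (Q.y0 0, Q.y 0, Q.y0 Q.S, Q.y Q.S, Q.nu Q.S)

/-- The cost of an extended sense process. -/
def Jext (h : ℝ × En n × ℝ × En n × ℝ → ℝ) (Q : ExtProcess n m C f g) : ℝ :=
  h (endptExt Q)

/-- The distance `d_∞((a,b,x,v),(a',b',x',v')) = |a-a'| + |b-b'| + ‖(x,v)-(x',v')‖_{L^∞(ℝ)}`. -/
def dInfty {n : ℕ} (a b : ℝ) (x : ℝ → En n) (v : ℝ → ℝ)
    (a' b' : ℝ) (x' : ℝ → En n) (v' : ℝ → ℝ) : ℝ :=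
  |a - a'| + |b - b'| + ⨆ t : ℝ, Real.sqrt (‖x t - x' t‖ ^ 2 + (v t - v' t) ^ 2)

/-- The distance `d_∞((y⁰(0),y⁰(S),y,ν), (ȳ⁰(0),ȳ⁰(S̄),ȳ,ν̄))` between the trajectories
of two extended sense processes. -/
def dExt (Q Qb : ExtProcess n m C f g) : ℝ :=
  dInfty (Q.y0 0) (Q.y0 Q.S) Q.y Q.nu (Qb.y0 0) (Qb.y0 Qb.S) Qb.y Qb.nu

/-- The time-reparameterization map `σ(t) = ∫_{t₁}^t (1 + |du/dτ|) dτ` of a strict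
sense process. -/
def sigmaMap (P : StrictProcess n m C f g) : ℝ → ℝ :=
  fun t => ∫ τ in P.t1..t, (1 + ‖P.u' τ‖)

/-- `Q = ℐ(P)`: the extended sense process `Q` is the embedding of the strict sense
process `P`, i.e. `S = σ(t₂)` and `(y⁰,y,ν,φ⁰,φ) ∘ σ = (id,x,v,id,u)` on `[t₁,t₂]`. -/
def IsEmbedding (P : StrictProcess n m C f g) (Q : ExtProcess n m C f g) : Prop :=
  Q.S = sigmaMap P P.t2 ∧
  ∀ t ∈ Icc P.t1 P.t2,
    Q.y0 (sigmaMap P t) = t ∧ Q.y (sigmaMap P t) = P.x t ∧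
    Q.nu (sigmaMap P t) = P.v t ∧ Q.phi0 (sigmaMap P t) = t ∧
    Q.phi (sigmaMap P t) = P.u t

/-- The extension `𝒯 × [0,K]` of the target set, as a subset of `ℝ × ℝⁿ × ℝ × ℝⁿ × ℝ`. -/
def targetExt (K : EReal) (T : Set (ℝ × En n × ℝ × En n)) :
    Set (ℝ × En n × ℝ × En n × ℝ) :=
  {z | (z.1, z.2.1, z.2.2.1, z.2.2.2.1) ∈ T ∧ 0 ≤ z.2.2.2.2 ∧ (z.2.2.2.2 : EReal) ≤ K}

/-- `(p₀,p,π,λ)` is a multiplier set for the feasible extended sense process `Q`: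
`(p₀,p) ∈ W^{1,1}([0,S];ℝ^{1+n})`, `π ≤ 0 ≤ λ`, `(p₀,p,λ) ≠ (0,0,0)`, and the adjoint
equations, the maximum condition (with zero maximized Hamiltonian) and the transversality
condition `(p₀(0),p(0),-p₀(S),-p(S),-π) ∈ λ∇h(ē) + N_{𝒯×[0,K]}(ē)` hold. -/
def IsMultiplier (K : EReal) (T : Set (ℝ × En n × ℝ × En n))
    (h : ℝ × En n × ℝ × En n × ℝ → ℝ) (Q : ExtProcess n m C f g)
    (p0 : ℝ → ℝ) (p : ℝ → En n) (pi lam : ℝ) : Prop :=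
  pi ≤ 0 ∧ 0 ≤ lam ∧
  ¬ ((∀ s ∈ Icc (0:ℝ) Q.S, p0 s = 0 ∧ p s = 0) ∧ lam = 0) ∧
  ∃ (p0' : ℝ → ℝ) (p' : ℝ → En n),
    IntervalIntegrable p0' volume 0 Q.S ∧ IntervalIntegrable p' volume 0 Q.S ∧
    (∀ s ∈ Icc (0:ℝ) Q.S, p0 s = p0 0 + ∫ r in (0:ℝ)..s, p0' r) ∧
    (∀ s ∈ Icc (0:ℝ) Q.S, p s = p 0 + ∫ r in (0:ℝ)..s, p' r) ∧
    -- adjoint equation for p₀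
    (∀ᵐ s ∂(volume : Measure ℝ), s ∈ Icc (0:ℝ) Q.S →
      p0' s = -(⟪p s, fderiv ℝ f (Q.y0 s, Q.y s) (1, 0)⟫ * Q.phi0' s
        + ∑ j, ⟪p s, fderiv ℝ (g j) (Q.y0 s, Q.y s) (1, 0)⟫ * Q.phi' s j)) ∧
    -- adjoint equation for p
    (∀ᵐ s ∂(volume : Measure ℝ), s ∈ Icc (0:ℝ) Q.S → ∀ w : En n,
      ⟪p' s, w⟫ = -(⟪p s, fderiv ℝ f (Q.y0 s, Q.y s) (0, w)⟫ * Q.phi0' s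
        + ∑ j, ⟪p s, fderiv ℝ (g j) (Q.y0 s, Q.y s) (0, w)⟫ * Q.phi' s j)) ∧
    -- maximum condition: the Hamiltonian attains its maximum 0 along the process
    (∀ᵐ s ∂(volume : Measure ℝ), s ∈ Icc (0:ℝ) Q.S →
      (⟪p s, Q.phi0' s • f (Q.y0 s, Q.y s) + ∑ j, Q.phi' s j • g j (Q.y0 s, Q.y s)⟫
        + p0 s * Q.phi0' s + pi * ‖Q.phi' s‖ = 0) ∧
      (∀ (w0 : ℝ) (w : En m), 0 ≤ w0 → w ∈ C → w0 + ‖w‖ = 1 →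
        ⟪p s, w0 • f (Q.y0 s, Q.y s) + ∑ j, w j • g j (Q.y0 s, Q.y s)⟫
          + p0 s * w0 + pi * ‖w‖ ≤ 0)) ∧
    -- transversality condition
    (∃ q ∈ limNC pair5 (targetExt K T) (endptExt Q),
      ∀ d : ℝ × En n × ℝ × En n × ℝ,
        pair5 ((p0 0, p 0, -p0 Q.S, -p Q.S, -pi) - q) d
          = lam * fderiv ℝ h (endptExt Q) d)

/-- `Q` is an extended sense extremal: it admits a multiplier set. -/
def IsExtremal (K : EReal) (T : Set (ℝ × En n × ℝ × En n))
    (h : ℝ × En n × ℝ × En n × ℝ → ℝ) (Q : ExtProcess n m C f g) : Prop :=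
  ∃ p0 p pi lam, IsMultiplier K T h Q p0 p pi lam

/-- `Q` is a normal extended sense extremal: it is an extremal and every multiplier
set for it has cost multiplier `λ > 0`. -/
def NormalExtremal (K : EReal) (T : Set (ℝ × En n × ℝ × En n))
    (h : ℝ × En n × ℝ × En n × ℝ → ℝ) (Q : ExtProcess n m C f g) : Prop :=
  IsExtremal K T h Q ∧
  ∀ p0 p pi lam, IsMultiplier K T h Q p0 p pi lam → 0 < lam

/-- Extended sense `L^∞` (global) minimizer. -/
def ExtGlobalMin (K : EReal) (T : Set (ℝ × En n × ℝ × En n))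
    (h : ℝ × En n × ℝ × En n × ℝ → ℝ) (Qb : ExtProcess n m C f g) : Prop :=
  ExtFeasible K T Qb ∧ ∀ Q : ExtProcess n m C f g, ExtFeasible K T Q →
    Jext h Qb ≤ Jext h Q

/-- Extended sense `L^∞` local minimizer. -/
def ExtLocalMin (K : EReal) (T : Set (ℝ × En n × ℝ × En n))
    (h : ℝ × En n × ℝ × En n × ℝ → ℝ) (Qb : ExtProcess n m C f g) : Prop :=
  ExtFeasible K T Qb ∧ ∃ δ > (0:ℝ), ∀ Q : ExtProcess n m C f g, ExtFeasible K T Q →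
    dExt Q Qb ≤ δ → Jext h Qb ≤ Jext h Q

/-- Strict sense `L^∞` local minimizer. -/
def StrictLocalMin (K : EReal) (T : Set (ℝ × En n × ℝ × En n))
    (h : ℝ × En n × ℝ × En n × ℝ → ℝ) (Pb : StrictProcess n m C f g) : Prop :=
  StrictFeasible K T Pb ∧ ∃ δ > (0:ℝ), ∀ P : StrictProcess n m C f g,
    StrictFeasible K T P →
    dInfty P.t1 P.t2 P.x P.v Pb.t1 Pb.t2 Pb.x Pb.v ≤ δ → Jstrict h Pb ≤ Jstrict h P

/-- A feasible extended sense process is isolated: for some `δ > 0` no feasible embedded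
strict sense process lies within distance `δ` of it. -/
def IsolatedProcess (K : EReal) (T : Set (ℝ × En n × ℝ × En n))
    (Qb : ExtProcess n m C f g) : Prop :=
  ∃ δ > (0:ℝ), ¬ ∃ (P : StrictProcess n m C f g) (Q : ExtProcess n m C f g),
    IsEmbedding P Q ∧ ExtFeasible K T Q ∧ dExt Q Qb < δ

variable (C) (f) (g) in
/-- No infimum gap: the infimum of the extended cost over feasible extended sense
processes coincides with the infimum of the cost over feasible strict sense processes. -/
def NoInfGap (K : EReal) (T : Set (ℝ × En n × ℝ × En n))
    (h : ℝ × En n × ℝ × En n × ℝ → ℝ) : Prop :=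
  sInf {c : ℝ | ∃ Q : ExtProcess n m C f g, ExtFeasible K T Q ∧ Jext h Q = c} =
  sInf {c : ℝ | ∃ P : StrictProcess n m C f g, StrictFeasible K T P ∧ Jstrict h P = c}

/-- No local infimum gap at `Qb`: for some `δ > 0` the cost of `Qb` equals the infimum
of the cost over feasible strict sense processes whose embeddings lie within distance
`δ` of `Qb`. -/
def NoLocalInfGap (K : EReal) (T : Set (ℝ × En n × ℝ × En n))
    (h : ℝ × En n × ℝ × En n × ℝ → ℝ) (Qb : ExtProcess n m C f g) : Prop :=
  ∃ δ > (0:ℝ), Jext h Qb =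
    sInf {c : ℝ | ∃ (P : StrictProcess n m C f g) (Q : ExtProcess n m C f g),
      IsEmbedding P Q ∧ StrictFeasible K T P ∧ dExt Q Qb < δ ∧ Jstrict h P = c}

variable (C) in
/-- Quick 1-controllability of the control system w.r.t. the target `𝒯` at a point
`(t₁,x₁,t₂,x₂) ∈ 𝒯`: for every limiting normal `ζ` with `ζ_{x₂} ≠ 0`,
`inf_{w ∈ 𝒞} ζ_{x₂} ⬝ Σ_j g_j(t₂,x₂) wʲ < 0`. -/
def QuickControllable (g : Fin m → ℝ × En n → En n)
    (T : Set (ℝ × En n × ℝ × En n)) (e : ℝ × En n × ℝ × En n) : Prop :=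
  ∀ ζ ∈ limNC pair4 T e, ζ.2.2.2 ≠ (0 : En n) →
    ∃ w ∈ C, ⟪ζ.2.2.2, ∑ j, w j • g j (e.2.2.1, e.2.2.2)⟫ < 0

/-- Drift controllability of the control system w.r.t. the target `𝒯` at a point
`(t₁,x₁,t₂,x₂) ∈ 𝒯`: for every limiting normal `ζ` with `ζ_{x₂} ≠ 0`,
`ζ_{x₂} ⬝ f(t₂,x₂) < 0`. -/
def DriftControllable (f : ℝ × En n → En n)
    (T : Set (ℝ × En n × ℝ × En n)) (e : ℝ × En n × ℝ × En n) : Prop :=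
  ∀ ζ ∈ limNC pair4 T e, ζ.2.2.2 ≠ (0 : En n) →
    ⟪ζ.2.2.2, f (e.2.2.1, e.2.2.2)⟫ < 0


section Aux

/-- Endpoint data of the embedding of a strict process. -/
lemma isEmbedding_endpoints {P : StrictProcess n m C f g} {Q : ExtProcess n m C f g}
    (hE : IsEmbedding P Q) :
    Q.y0 0 = P.t1 ∧ Q.y 0 = P.x P.t1 ∧ Q.nu 0 = P.v P.t1 ∧
      Q.y0 Q.S = P.t2 ∧ Q.y Q.S = P.x P.t2 ∧ Q.nu Q.S = P.v P.t2 := by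
  have h0 : sigmaMap P P.t1 = 0 := by simp [sigmaMap]
  have h1 := hE.2 P.t1 ⟨le_refl _, P.ht.le⟩
  have h2 := hE.2 P.t2 ⟨P.ht.le, le_refl _⟩
  rw [h0] at h1
  rw [← hE.1] at h2
  exact ⟨h1.1, h1.2.1, h1.2.2.1, h2.1, h2.2.1, h2.2.2.1⟩

lemma strictFeasible_of_embedding {K : EReal} {T : Set (ℝ × En n × ℝ × En n)}
    {P : StrictProcess n m C f g} {Q : ExtProcess n m C f g}
    (hE : IsEmbedding P Q) (hQ : ExtFeasible K T Q) : StrictFeasible K T P := by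
  obtain ⟨e1, e2, e3, e4, e5, e6⟩ := isEmbedding_endpoints hE
  refine ⟨?_, ?_, ?_⟩
  · rw [← e3]; exact hQ.1
  · rw [← e6]; exact hQ.2.1
  · have := hQ.2.2; rw [e1, e2, e4, e5] at this; exact this

lemma jext_eq_jstrict_of_embedding {h : ℝ × En n × ℝ × En n × ℝ → ℝ}
    {P : StrictProcess n m C f g} {Q : ExtProcess n m C f g}
    (hE : IsEmbedding P Q) : Jext h Q = Jstrict h P := by
  obtain ⟨e1, e2, e3, e4, e5, e6⟩ := isEmbedding_endpoints hE
  simp [Jext, Jstrict, endptExt, e1, e2, e3, e4, e5, e6]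

/-- Any extended process has globally bounded `y` and `nu`. -/
lemma extProcess_bounded (Q : ExtProcess n m C f g) :
    ∃ M : ℝ, ∀ t : ℝ, ‖Q.y t‖ ≤ M ∧ |Q.nu t| ≤ M := by
  obtain ⟨L, hL⟩ := Q.lip
  have key : ∀ t ∈ Icc (0:ℝ) Q.S, ‖Q.y t - Q.y 0‖ ≤ L * Q.S ∧ |Q.nu t - Q.nu 0| ≤ L * Q.S := by
    intro t ht
    have h0 : (0:ℝ) ∈ Icc (0:ℝ) Q.S := ⟨le_refl _, Q.hS⟩
    have := (lipschitzOnWith_iff_dist_le_mul.1 hL) t ht 0 h0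
    have hdt : dist t 0 ≤ Q.S := by
      rw [Real.dist_eq, sub_zero, abs_of_nonneg ht.1]; exact ht.2
    have hle : dist ((Q.y0 t, Q.y t, Q.nu t, Q.phi0 t, Q.phi t))
        ((Q.y0 0, Q.y 0, Q.nu 0, Q.phi0 0, Q.phi 0)) ≤ L * Q.S := by
      refine this.trans ?_
      exact mul_le_mul_of_nonneg_left hdt L.coe_nonneg
    constructor
    · have : dist (Q.y t) (Q.y 0) ≤ _ := le_trans (le_trans (le_max_left _ _) (le_max_right _ _)) hle
      rwa [dist_eq_norm] at this
    · have : dist (Q.nu t) (Q.nu 0) ≤ _ :=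
        le_trans (le_trans (le_trans (le_max_left _ _) (le_max_right _ _)) (le_max_right _ _)) hle
      rwa [Real.dist_eq] at this
  refine ⟨‖Q.y 0‖ + |Q.nu 0| + L * Q.S, fun t => ?_⟩
  have hLS : (0:ℝ) ≤ L * Q.S := mul_nonneg L.coe_nonneg Q.hS
  have main : ∀ t ∈ Icc (0:ℝ) Q.S, ‖Q.y t‖ ≤ ‖Q.y 0‖ + |Q.nu 0| + L * Q.S ∧
      |Q.nu t| ≤ ‖Q.y 0‖ + |Q.nu 0| + L * Q.S := by
    intro t ht
    obtain ⟨h1, h2⟩ := key t ht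
    constructor
    · calc ‖Q.y t‖ ≤ ‖Q.y 0‖ + ‖Q.y t - Q.y 0‖ := by
            simpa using norm_add_le (Q.y 0) (Q.y t - Q.y 0)
        _ ≤ ‖Q.y 0‖ + |Q.nu 0| + L * Q.S := by
            have := abs_nonneg (Q.nu 0); linarith
    · calc |Q.nu t| ≤ |Q.nu 0| + |Q.nu t - Q.nu 0| := by
            simpa using abs_add_le (Q.nu 0) (Q.nu t - Q.nu 0)
        _ ≤ ‖Q.y 0‖ + |Q.nu 0| + L * Q.S := by
            have := norm_nonneg (Q.y 0); linarith
  rcases le_or_gt t 0 with h | h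
  · rw [Q.hyconstl t h, Q.hnuconstl t h]
    exact main 0 ⟨le_refl _, Q.hS⟩
  rcases le_or_gt Q.S t with h' | h'
  · rw [Q.hyconstr t h', Q.hnuconstr t h']
    exact main Q.S ⟨Q.hS, le_refl _⟩
  · exact main t ⟨h.le, h'.le⟩

/-- The endpoint data of two extended processes differ by at most `dExt`. -/
lemma dist_endptExt_le_dExt (Q Qb : ExtProcess n m C f g) :
    dist (endptExt Q) (endptExt Qb) ≤ dExt Q Qb := by
  obtain ⟨MQ, hMQ⟩ := extProcess_bounded Q
  obtain ⟨MB, hMB⟩ := extProcess_bounded Qb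
  set F : ℝ → ℝ := fun t => Real.sqrt (‖Q.y t - Qb.y t‖ ^ 2 + (Q.nu t - Qb.nu t) ^ 2) with hF
  have hFbdd : BddAbove (range F) := by
    refine ⟨Real.sqrt ((MQ + MB) ^ 2 + (MQ + MB) ^ 2), ?_⟩
    rintro _ ⟨t, rfl⟩
    apply Real.sqrt_le_sqrt
    have h1 : ‖Q.y t - Qb.y t‖ ≤ MQ + MB := by
      refine (norm_sub_le _ _).trans ?_
      exact add_le_add (hMQ t).1 (hMB t).1
    have h2 : |Q.nu t - Qb.nu t| ≤ MQ + MB := by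
      refine (abs_sub _ _).trans ?_
      exact add_le_add (hMQ t).2 (hMB t).2
    have e1 : ‖Q.y t - Qb.y t‖ ^ 2 ≤ (MQ + MB) ^ 2 :=
      pow_le_pow_left₀ (norm_nonneg _) h1 2
    have e2 : (Q.nu t - Qb.nu t) ^ 2 ≤ (MQ + MB) ^ 2 := by
      rw [← sq_abs]; exact pow_le_pow_left₀ (abs_nonneg _) h2 2
    linarith
  have hFle : ∀ t, F t ≤ ⨆ t, F t := fun t => le_ciSup hFbdd t
  have hsupnn : 0 ≤ ⨆ t, F t := Real.iSup_nonneg fun t => Real.sqrt_nonneg _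
  have hnorm_le : ∀ t, ‖Q.y t - Qb.y t‖ ≤ ⨆ t, F t := by
    intro t
    refine le_trans ?_ (hFle t)
    rw [hF]
    have : ‖Q.y t - Qb.y t‖ = Real.sqrt (‖Q.y t - Qb.y t‖ ^ 2) := by
      rw [Real.sqrt_sq (norm_nonneg _)]
    rw [this]
    apply Real.sqrt_le_sqrt
    nlinarith [sq_nonneg (Q.nu t - Qb.nu t), Real.sq_sqrt (norm_nonneg (Q.y t - Qb.y t))]
  have hnu_le : ∀ t, |Q.nu t - Qb.nu t| ≤ ⨆ t, F t := by
    intro t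
    refine le_trans ?_ (hFle t)
    rw [hF]
    have : |Q.nu t - Qb.nu t| = Real.sqrt ((Q.nu t - Qb.nu t) ^ 2) := by
      rw [Real.sqrt_sq_eq_abs]
    rw [this]
    apply Real.sqrt_le_sqrt
    nlinarith [sq_nonneg ‖Q.y t - Qb.y t‖]
  have hd : dExt Q Qb = |Q.y0 0 - Qb.y0 0| + |Q.y0 Q.S - Qb.y0 Qb.S| + ⨆ t, F t := rfl
  have habs1 : (0:ℝ) ≤ |Q.y0 0 - Qb.y0 0| := abs_nonneg _
  have habs2 : (0:ℝ) ≤ |Q.y0 Q.S - Qb.y0 Qb.S| := abs_nonneg _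
  -- endpoints at the right end, evaluated at a common large time
  set tmax : ℝ := max Q.S Qb.S with htmax
  have hyS : Q.y tmax = Q.y Q.S := Q.hyconstr tmax (le_max_left _ _)
  have hySb : Qb.y tmax = Qb.y Qb.S := Qb.hyconstr tmax (le_max_right _ _)
  have hnuS : Q.nu tmax = Q.nu Q.S := Q.hnuconstr tmax (le_max_left _ _)
  have hnuSb : Qb.nu tmax = Qb.nu Qb.S := Qb.hnuconstr tmax (le_max_right _ _)
  have goal1 : dist (Q.y0 0) (Qb.y0 0) ≤ dExt Q Qb := by
    rw [Real.dist_eq, hd]; linarith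
  have goal2 : dist (Q.y 0) (Qb.y 0) ≤ dExt Q Qb := by
    rw [dist_eq_norm, hd]
    have := hnorm_le 0; linarith
  have goal3 : dist (Q.y0 Q.S) (Qb.y0 Qb.S) ≤ dExt Q Qb := by
    rw [Real.dist_eq, hd]; linarith
  have goal4 : dist (Q.y Q.S) (Qb.y Qb.S) ≤ dExt Q Qb := by
    rw [dist_eq_norm, hd]
    have := hnorm_le tmax
    rw [hyS, hySb] at this; linarith
  have goal5 : dist (Q.nu Q.S) (Qb.nu Qb.S) ≤ dExt Q Qb := by
    rw [Real.dist_eq, hd]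
    have := hnu_le tmax
    rw [hnuS, hnuSb] at this; linarith
  show dist ((Q.y0 0, Q.y 0, Q.y0 Q.S, Q.y Q.S, Q.nu Q.S))
      ((Qb.y0 0, Qb.y 0, Qb.y0 Qb.S, Qb.y Qb.S, Qb.nu Qb.S)) ≤ dExt Q Qb
  simp only [Prod.dist_eq]
  exact max_le goal1 (max_le goal2 (max_le goal3 (max_le goal4 goal5)))


/-- Change of variables via a map whose pushforward of Lebesgue measure is a density. -/
lemma cov_aux {E : Type*} [NormedAddCommGroup E] [NormedSpace ℝ E]
    {rnn : ℝ → ℝ≥0} (hr : Measurable rnn) {tau : ℝ → ℝ} (ht : Measurable tau)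
    (hmap : Measure.map tau (volume : Measure ℝ)
      = (volume : Measure ℝ).withDensity (fun t => (rnn t : ENNReal)))
    {F : ℝ → E} (hF : StronglyMeasurable F) {s : Set ℝ} (hs : MeasurableSet s) :
    (∫ x in tau ⁻¹' s, F (tau x) = ∫ t in s, (rnn t : ℝ) • F t) ∧
    (IntegrableOn (fun x => F (tau x)) (tau ⁻¹' s) volume ↔
      IntegrableOn (fun t => (rnn t : ℝ) • F t) s volume) := by
  have h1 : Measure.map tau ((volume : Measure ℝ).restrict (tau ⁻¹' s))
      = ((volume : Measure ℝ).restrict s).withDensity (fun t => (rnn t : ENNReal)) := by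
    rw [← Measure.restrict_map ht hs, hmap, MeasureTheory.restrict_withDensity hs]
  have hFm : AEStronglyMeasurable F (Measure.map tau ((volume : Measure ℝ).restrict
      (tau ⁻¹' s))) := hF.aestronglyMeasurable
  constructor
  · have h2 := integral_map (μ := (volume : Measure ℝ).restrict (tau ⁻¹' s))
      ht.aemeasurable hFm
    rw [h1, integral_withDensity_eq_integral_smul hr] at h2
    rw [← h2]
    simp [NNReal.smul_def]
  · have h2 := integrable_map_measure hFm ht.aemeasurable
    rw [h1, integrable_withDensity_iff_integrable_smul hr] at h2
    constructor
    · intro hI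
      have := h2.2 hI
      simpa [NNReal.smul_def, IntegrableOn] using this
    · intro hI
      exact h2.1 (by simpa [NNReal.smul_def, IntegrableOn] using hI)

/-- Interval version of the change of variables. -/
lemma cov_interval {E : Type*} [NormedAddCommGroup E] [NormedSpace ℝ E]
    {rnn : ℝ → ℝ≥0} (hr : Measurable rnn) {tau : ℝ → ℝ} (ht : Measurable tau)
    (hmap : Measure.map tau (volume : Measure ℝ)
      = (volume : Measure ℝ).withDensity (fun t => (rnn t : ENNReal)))
    {F : ℝ → E} (hF : StronglyMeasurable F)
    {a b A B : ℝ} (hab : a ≤ b) (hAB : A ≤ B) (hpre : tau ⁻¹' (Ioc a b) = Ioc A B) :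
    (∫ s in A..B, F (tau s) = ∫ t in a..b, (rnn t : ℝ) • F t) ∧
    (IntervalIntegrable (fun s => F (tau s)) volume A B ↔
      IntegrableOn (fun t => (rnn t : ℝ) • F t) (Ioc a b) volume) := by
  obtain ⟨h1, h2⟩ := cov_aux hr ht hmap hF (measurableSet_Ioc (a := a) (b := b))
  rw [hpre] at h1 h2
  constructor
  · rw [intervalIntegral.integral_of_le hAB, intervalIntegral.integral_of_le hab]
    exact h1
  · rw [intervalIntegrable_iff_integrableOn_Ioc_of_le hAB]
    exact h2

lemma euclidean_coord_le_norm {k : ℕ} (w : En k) (j : Fin k) : |w j| ≤ ‖w‖ := by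
  rw [EuclideanSpace.norm_eq]
  have h1 : |w j| = Real.sqrt (‖w j‖ ^ 2) := by
    rw [Real.sqrt_sq (norm_nonneg _), Real.norm_eq_abs]
  rw [h1]
  apply Real.sqrt_le_sqrt
  exact Finset.single_le_sum (f := fun i => ‖w i‖ ^ 2) (fun i _ => by positivity)
    (Finset.mem_univ j)

lemma diff_eq_integral {E : Type*} [NormedAddCommGroup E] [NormedSpace ℝ E]
    {w w' : ℝ → E} {a b : ℝ}
    (hint : IntervalIntegrable w' volume a b)
    (hac : ∀ t ∈ Icc a b, w t = w a + ∫ q in a..t, w' q)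
    {t t' : ℝ} (ht : t ∈ Icc a b) (ht' : t' ∈ Icc a b) :
    w t' - w t = ∫ q in t..t', w' q := by
  have hab : a ≤ b := ht.1.trans ht.2
  have hmem : ∀ {c : ℝ}, c ∈ Icc a b → c ∈ uIcc a b := by
    intro c hc; rw [uIcc_of_le hab]; exact hc
  have h1 : IntervalIntegrable w' volume a t :=
    hint.mono_set (uIcc_subset_uIcc left_mem_uIcc (hmem ht))
  have h2 : IntervalIntegrable w' volume t t' :=
    hint.mono_set (uIcc_subset_uIcc (hmem ht) (hmem ht'))
  have h3 := intervalIntegral.integral_add_adjacent_intervals h1 h2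
  rw [hac t ht, hac t' ht', ← h3]
  abel

set_option maxHeartbeats 2000000 in
/-- The embedding construction: every strict sense process gives rise to an extended
sense process with the same endpoint data. -/
lemma exists_ext_of_strict (hC : IsClosedConvexCone C)
    (hf : Continuous f) (hg : ∀ j, Continuous (g j))
    (P : StrictProcess n m C f g) :
    ∃ Q : ExtProcess n m C f g, Q.y0 0 = P.t1 ∧ Q.y 0 = P.x P.t1 ∧ Q.nu 0 = P.v P.t1 ∧
      Q.y0 Q.S = P.t2 ∧ Q.y Q.S = P.x P.t2 ∧ Q.nu Q.S = P.v P.t2 := by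
  classical
  obtain ⟨hCc, hCconv, hCsc⟩ := hC
  -- measurable versions of the derivatives
  have hu : IntegrableOn P.u' (Ioc P.t1 P.t2) volume :=
    (intervalIntegrable_iff_integrableOn_Ioc_of_le P.ht.le).1 P.hu'int
  have hx : IntegrableOn P.x' (Ioc P.t1 P.t2) volume :=
    (intervalIntegrable_iff_integrableOn_Ioc_of_le P.ht.le).1 P.hx'int
  set uh : ℝ → En m := hu.aestronglyMeasurable.mk P.u' with huh_def
  have huhm : StronglyMeasurable uh := hu.aestronglyMeasurable.stronglyMeasurable_mk
  have huae : ∀ᵐ t ∂(volume : Measure ℝ), t ∈ Ioc P.t1 P.t2 → P.u' t = uh t :=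
    (ae_restrict_iff' measurableSet_Ioc).1 hu.aestronglyMeasurable.ae_eq_mk
  set xh : ℝ → En n := hx.aestronglyMeasurable.mk P.x' with hxh_def
  have hxhm : StronglyMeasurable xh := hx.aestronglyMeasurable.stronglyMeasurable_mk
  have hxae : ∀ᵐ t ∂(volume : Measure ℝ), t ∈ Ioc P.t1 P.t2 → P.x' t = xh t :=
    (ae_restrict_iff' measurableSet_Ioc).1 hx.aestronglyMeasurable.ae_eq_mk
  set ut : ℝ → En m := (Ioc P.t1 P.t2).indicator uh with hut_def
  set xt : ℝ → En n := (Ioc P.t1 P.t2).indicator xh with hxt_def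
  have hutm : StronglyMeasurable ut := huhm.indicator measurableSet_Ioc
  have hxtm : StronglyMeasurable xt := hxhm.indicator measurableSet_Ioc
  have hut_ae : ∀ᵐ t ∂(volume : Measure ℝ), t ∈ Ioc P.t1 P.t2 → ut t = P.u' t := by
    filter_upwards [huae] with t h ht
    rw [hut_def, indicator_of_mem ht, ← h ht]
  have hxt_ae : ∀ᵐ t ∂(volume : Measure ℝ), t ∈ Ioc P.t1 P.t2 → xt t = P.x' t := by
    filter_upwards [hxae] with t h ht
    rw [hxt_def, indicator_of_mem ht, ← h ht]
  have hutint : Integrable ut volume :=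
    (integrable_indicator_iff measurableSet_Ioc).2 (hu.congr hu.aestronglyMeasurable.ae_eq_mk)
  have hxtint : Integrable xt volume :=
    (integrable_indicator_iff measurableSet_Ioc).2 (hx.congr hx.aestronglyMeasurable.ae_eq_mk)
  -- the density and the time change
  set rho : ℝ → ℝ := fun t => 1 + ‖ut t‖ with hrho_def
  have hrho1 : ∀ t, 1 ≤ rho t := fun t => le_add_of_nonneg_right (norm_nonneg _)
  have hrhopos : ∀ t, 0 < rho t := fun t => lt_of_lt_of_le one_pos (hrho1 t)
  have hrhom : Measurable rho :=
    (measurable_const.add hutm.norm.measurable)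
  have hrhoint : ∀ a b : ℝ, IntervalIntegrable rho volume a b := fun a b =>
    intervalIntegrable_const.add hutint.norm.intervalIntegrable
  set sg : ℝ → ℝ := fun t => ∫ q in P.t1..t, rho q with hsg_def
  have hsg_sub : ∀ a b : ℝ, sg b - sg a = ∫ q in a..b, rho q := by
    intro a b
    have h := intervalIntegral.integral_add_adjacent_intervals
      (hrhoint P.t1 a) (hrhoint a b)
    have hb : sg b = ∫ q in P.t1..b, rho q := rfl
    have ha : sg a = ∫ q in P.t1..a, rho q := rfl
    rw [hb, ha]; linarith
  have hsg_gap : ∀ a b : ℝ, a ≤ b → b - a ≤ sg b - sg a := by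
    intro a b hab
    rw [hsg_sub]
    calc b - a = ∫ _ in a..b, (1:ℝ) := by simp
      _ ≤ ∫ q in a..b, rho q :=
        intervalIntegral.integral_mono_on hab intervalIntegrable_const (hrhoint a b)
          (fun x _ => hrho1 x)
  have hsgmono : StrictMono sg := fun a b hab => by
    have := hsg_gap a b hab.le; linarith
  have hsg_t1 : sg P.t1 = 0 := by simp [hsg_def]
  have hsgcont : Continuous sg := intervalIntegral.continuous_primitive hrhoint P.t1
  have hsgtop : Tendsto sg atTop atTop := by
    have hev : (fun t => t - P.t1) ≤ᶠ[atTop] sg := by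
      filter_upwards [eventually_ge_atTop P.t1] with t ht
      have := hsg_gap P.t1 t ht
      rw [hsg_t1] at this
      show t - P.t1 ≤ sg t
      linarith
    have hlin : Tendsto (fun t : ℝ => t - P.t1) atTop atTop := by
      simpa [sub_eq_add_neg] using tendsto_atTop_add_const_right atTop (-P.t1) tendsto_id
    exact tendsto_atTop_mono' atTop hev hlin
  have hsgbot : Tendsto sg atBot atBot := by
    have hev : sg ≤ᶠ[atBot] (fun t => t - P.t1) := by
      filter_upwards [eventually_le_atBot P.t1] with t ht
      have := hsg_gap t P.t1 ht
      rw [hsg_t1] at this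
      show sg t ≤ t - P.t1
      linarith
    have hlin : Tendsto (fun t : ℝ => t - P.t1) atBot atBot := by
      simpa [sub_eq_add_neg] using tendsto_atBot_add_const_right atBot (-P.t1) tendsto_id
    exact tendsto_atBot_mono' atBot hev hlin
  have hsgsurj : Function.Surjective sg := hsgcont.surjective hsgtop hsgbot
  set e : ℝ ≃o ℝ := StrictMono.orderIsoOfSurjective sg hsgmono hsgsurj with he_def
  set tau : ℝ → ℝ := fun s => e.symm s with htau_def
  have htau_sg : ∀ t, tau (sg t) = t := fun t =>
    StrictMono.orderIsoOfSurjective_symm_apply_self sg hsgmono hsgsurj t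
  have hsg_tau : ∀ s, sg (tau s) = s := by
    intro s
    have h := e.apply_symm_apply s
    have hcoe : ∀ t, e t = sg t := fun t => rfl
    rw [htau_def]
    dsimp only
    rw [← hcoe]
    exact h
  have htaumono : Monotone tau := fun a b hab => e.symm.monotone hab
  have htausmono : StrictMono tau := fun a b hab => e.symm.strictMono hab
  have htaum : Measurable tau := htaumono.measurable
  have htau0 : tau 0 = P.t1 := by rw [← hsg_t1, htau_sg]
  have htauS : tau (sg P.t2) = P.t2 := htau_sg _
  have htaulip : ∀ s s' : ℝ, s ≤ s' → tau s' - tau s ≤ s' - s := by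
    intro s s' hss
    have h2 : tau s ≤ tau s' := htaumono hss
    have := hsg_gap (tau s) (tau s') h2
    rw [hsg_tau, hsg_tau] at this; linarith
  have hSpos : 0 ≤ sg P.t2 := by
    have h1 := hsg_gap P.t1 P.t2 P.ht.le
    have h2 := P.ht
    rw [hsg_t1] at h1; linarith
  have htauIcc : ∀ s ∈ Icc (0:ℝ) (sg P.t2), tau s ∈ Icc P.t1 P.t2 := fun s hs =>
    ⟨by rw [← htau0]; exact htaumono hs.1, by rw [← htauS]; exact htaumono hs.2⟩
  have htauIoc : ∀ s : ℝ, s ∈ Icc (0:ℝ) (sg P.t2) → s ≠ 0 → tau s ∈ Ioc P.t1 P.t2 :=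
    fun s hs hs0 =>
    ⟨by rw [← htau0]; exact htausmono (lt_of_le_of_ne hs.1 (Ne.symm hs0)),
     by rw [← htauS]; exact htaumono hs.2⟩
  have hpre : ∀ a b : ℝ, tau ⁻¹' (Ioc a b) = Ioc (sg a) (sg b) := by
    intro a b
    ext s
    simp only [mem_preimage, mem_Ioc]
    have h1 : a < tau s ↔ sg a < s := by rw [← hsgmono.lt_iff_lt, hsg_tau]
    have h2 : tau s ≤ b ↔ s ≤ sg b := by rw [← hsgmono.le_iff_le, hsg_tau]
    rw [h1, h2]
  -- the pushforward of Lebesgue measure under `tau` has density `rho`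
  set rnn : ℝ → ℝ≥0 := fun t => Real.toNNReal (rho t) with hrnn_def
  have hrnnm : Measurable rnn := hrhom.real_toNNReal
  have hrnncoe : ∀ t, (rnn t : ℝ) = rho t := fun t =>
    Real.coe_toNNReal _ (hrhopos t).le
  have hmap : Measure.map tau (volume : Measure ℝ)
      = (volume : Measure ℝ).withDensity (fun t => (rnn t : ENNReal)) := by
    refine MeasureTheory.Measure.ext_of_Ioc' _ _ ?_ ?_
    · intro a b _
      rw [Measure.map_apply htaum measurableSet_Ioc, hpre, Real.volume_Ioc]
      exact ENNReal.ofReal_ne_top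
    · intro a b hab
      rw [Measure.map_apply htaum measurableSet_Ioc, hpre, Real.volume_Ioc,
        withDensity_apply _ measurableSet_Ioc]
      have hint : IntegrableOn rho (Ioc a b) volume :=
        (intervalIntegrable_iff_integrableOn_Ioc_of_le hab.le).1 (hrhoint a b)
      have hnn : 0 ≤ᵐ[volume.restrict (Ioc a b)] rho :=
        Filter.Eventually.of_forall fun t => (hrhopos t).le
      have key := MeasureTheory.ofReal_integral_eq_lintegral_ofReal hint hnn
      have : ∀ᵐ t ∂(volume.restrict (Ioc a b)), ENNReal.ofReal (rho t) = (rnn t : ENNReal) :=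
        Filter.Eventually.of_forall fun t => rfl
      rw [lintegral_congr_ae this] at key
      rw [← key]
      congr 1
      rw [← intervalIntegral.integral_of_le hab.le, ← hsg_sub]
  -- pulling back null sets
  have hnull : ∀ (p : ℝ → Prop), (∀ᵐ t ∂(volume : Measure ℝ), p t) →
      (∀ᵐ s ∂(volume : Measure ℝ), p (tau s)) := by
    intro p hp
    rw [ae_iff] at hp ⊢
    have hsub : {s | ¬ p (tau s)} ⊆ tau ⁻¹' (toMeasurable volume {t | ¬ p t}) :=
      fun s hs => subset_toMeasurable _ _ hs
    refine measure_mono_null hsub ?_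
    have h1 := Measure.map_apply (μ := (volume : Measure ℝ)) htaum
      (measurableSet_toMeasurable volume {t | ¬ p t})
    rw [hmap] at h1
    rw [← h1, withDensity_apply _ (measurableSet_toMeasurable _ _)]
    have h2 : volume (toMeasurable volume {t | ¬ p t}) = 0 := by
      rwa [measure_toMeasurable]
    rw [setLIntegral_measure_zero _ _ h2]
  have hne0 : ∀ᵐ s ∂(volume : Measure ℝ), s ≠ (0:ℝ) := by
    rw [ae_iff]
    have : {s : ℝ | ¬ s ≠ 0} = {0} := by ext s; simp
    rw [this]
    exact Real.volume_singleton
  -- the integrand fields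
  set F0 : ℝ → ℝ := fun q => (rho q)⁻¹ with hF0_def
  set Fy : ℝ → En n := fun q => (rho q)⁻¹ • xt q with hFy_def
  set Fn : ℝ → ℝ := fun q => (rho q)⁻¹ * ‖ut q‖ with hFn_def
  set Fp : ℝ → En m := fun q => (rho q)⁻¹ • ut q with hFp_def
  have hF0m : StronglyMeasurable F0 := hrhom.inv.stronglyMeasurable
  have hFym : StronglyMeasurable Fy :=
    (hrhom.inv.stronglyMeasurable).smul hxtm
  have hFnm : StronglyMeasurable Fn :=
    (hrhom.inv.stronglyMeasurable).mul hutm.norm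
  have hFpm : StronglyMeasurable Fp :=
    (hrhom.inv.stronglyMeasurable).smul hutm
  have hsmul0 : ∀ q, (rnn q : ℝ) • F0 q = (1:ℝ) := fun q => by
    rw [hrnncoe, hF0_def]
    exact mul_inv_cancel₀ (hrhopos q).ne'
  have hsmuly : ∀ q, (rnn q : ℝ) • Fy q = xt q := fun q => by
    rw [hrnncoe, hFy_def]
    dsimp only
    rw [smul_smul, mul_inv_cancel₀ (hrhopos q).ne', one_smul]
  have hsmuln : ∀ q, (rnn q : ℝ) • Fn q = ‖ut q‖ := fun q => by
    rw [hrnncoe, hFn_def]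
    dsimp only
    rw [smul_eq_mul, ← mul_assoc, mul_inv_cancel₀ (hrhopos q).ne', one_mul]
  have hsmulp : ∀ q, (rnn q : ℝ) • Fp q = ut q := fun q => by
    rw [hrnncoe, hFp_def]
    dsimp only
    rw [smul_smul, mul_inv_cancel₀ (hrhopos q).ne', one_smul]
  -- change of variables for each  on [t1, t]
  have hpre' : ∀ t : ℝ, tau ⁻¹' (Ioc P.t1 t) = Ioc 0 (sg t) := by
    intro t; rw [hpre, hsg_t1]
  have hsgt_nonneg : ∀ t ∈ Icc P.t1 P.t2, 0 ≤ sg t := by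
    intro t ht
    have h1 := hsg_gap P.t1 t ht.1
    have h2 := ht.1
    rw [hsg_t1] at h1; linarith
  -- change of variables applied on subintervals [t1, t]
  have hIccT : P.t2 ∈ Icc P.t1 P.t2 := ⟨P.ht.le, le_refl _⟩
  have hcov0 := fun (t : ℝ) (ht : t ∈ Icc P.t1 P.t2) =>
    cov_interval hrnnm htaum hmap hF0m ht.1 (hsgt_nonneg t ht) (hpre' t)
  have hcovy := fun (t : ℝ) (ht : t ∈ Icc P.t1 P.t2) =>
    cov_interval hrnnm htaum hmap hFym ht.1 (hsgt_nonneg t ht) (hpre' t)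
  have hcovn := fun (t : ℝ) (ht : t ∈ Icc P.t1 P.t2) =>
    cov_interval hrnnm htaum hmap hFnm ht.1 (hsgt_nonneg t ht) (hpre' t)
  have hcovp := fun (t : ℝ) (ht : t ∈ Icc P.t1 P.t2) =>
    cov_interval hrnnm htaum hmap hFpm ht.1 (hsgt_nonneg t ht) (hpre' t)
  -- integrability of the reparameterized derivatives
  have hIocFin : (volume : Measure ℝ) (Ioc P.t1 P.t2) < ⊤ := by
    rw [Real.volume_Ioc]; exact ENNReal.ofReal_lt_top
  have hy0int : IntervalIntegrable (fun s => F0 (tau s)) volume 0 (sg P.t2) := by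
    refine ((hcov0 P.t2 hIccT).2).2 ?_
    have h1 : (fun q => (rnn q : ℝ) • F0 q) = fun _ => (1:ℝ) := funext hsmul0
    rw [h1]
    exact integrableOn_const hIocFin.ne
  have hyint : IntervalIntegrable (fun s => Fy (tau s)) volume 0 (sg P.t2) := by
    refine ((hcovy P.t2 hIccT).2).2 ?_
    rw [funext hsmuly]
    exact hxtint.integrableOn
  have hnuint : IntervalIntegrable (fun s => Fn (tau s)) volume 0 (sg P.t2) := by
    refine ((hcovn P.t2 hIccT).2).2 ?_
    rw [funext hsmuln]
    exact hutint.norm.integrableOn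
  have hphiint : IntervalIntegrable (fun s => Fp (tau s)) volume 0 (sg P.t2) := by
    refine ((hcovp P.t2 hIccT).2).2 ?_
    rw [funext hsmulp]
    exact hutint.integrableOn
  -- absolute continuity relations
  have hemptyIoc : ∀ s ∈ Icc (0:ℝ) (sg P.t2), Ioc (tau s) P.t1 = ∅ := fun s hs =>
    Ioc_eq_empty (not_lt.2 (htauIcc s hs).1)
  have hac0 : ∀ s ∈ Icc (0:ℝ) (sg P.t2),
      (∫ r in (0:ℝ)..s, F0 (tau r)) = tau s - P.t1 := by
    intro s hs
    have ht : tau s ∈ Icc P.t1 P.t2 := htauIcc s hs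
    have h1 := (hcov0 (tau s) ht).1
    rw [hsg_tau] at h1
    rw [h1, funext hsmul0]
    simp
  have hacy : ∀ s ∈ Icc (0:ℝ) (sg P.t2),
      (∫ r in (0:ℝ)..s, Fy (tau r)) = ∫ q in P.t1..(tau s), P.x' q := by
    intro s hs
    have ht : tau s ∈ Icc P.t1 P.t2 := htauIcc s hs
    have h1 := (hcovy (tau s) ht).1
    rw [hsg_tau] at h1
    rw [h1, funext hsmuly]
    refine intervalIntegral.integral_congr_ae' ?_ ?_
    · filter_upwards [hxt_ae] with q hq hq'
      exact hq (Ioc_subset_Ioc_right ht.2 hq')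
    · filter_upwards with q hq'
      rw [hemptyIoc s hs] at hq'
      exact absurd hq' (notMem_empty q)
  have hacn : ∀ s ∈ Icc (0:ℝ) (sg P.t2),
      (∫ r in (0:ℝ)..s, Fn (tau r)) = ∫ q in P.t1..(tau s), P.v' q := by
    intro s hs
    have ht : tau s ∈ Icc P.t1 P.t2 := htauIcc s hs
    have h1 := (hcovn (tau s) ht).1
    rw [hsg_tau] at h1
    rw [h1, funext hsmuln]
    refine intervalIntegral.integral_congr_ae' ?_ ?_
    · filter_upwards [hut_ae, P.hvar] with q hq hvar hq'
      have hqI : q ∈ Ioc P.t1 P.t2 := Ioc_subset_Ioc_right ht.2 hq'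
      rw [hq hqI, ← hvar (Ioc_subset_Icc_self hqI)]
    · filter_upwards with q hq'
      rw [hemptyIoc s hs] at hq'
      exact absurd hq' (notMem_empty q)
  have hacp : ∀ s ∈ Icc (0:ℝ) (sg P.t2),
      (∫ r in (0:ℝ)..s, Fp (tau r)) = ∫ q in P.t1..(tau s), P.u' q := by
    intro s hs
    have ht : tau s ∈ Icc P.t1 P.t2 := htauIcc s hs
    have h1 := (hcovp (tau s) ht).1
    rw [hsg_tau] at h1
    rw [h1, funext hsmulp]
    refine intervalIntegral.integral_congr_ae' ?_ ?_
    · filter_upwards [hut_ae] with q hq hq'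
      exact hq (Ioc_subset_Ioc_right ht.2 hq')
    · filter_upwards with q hq'
      rw [hemptyIoc s hs] at hq'
      exact absurd hq' (notMem_empty q)
  -- continuity and boundedness of the data along the trajectory
  have hne : ∀ c : ℝ, ∀ᵐ q ∂(volume : Measure ℝ), q ≠ c := by
    intro c
    rw [ae_iff]
    have : {q : ℝ | ¬ q ≠ c} = {c} := by ext q; simp
    rw [this]
    exact Real.volume_singleton
  have hxIcc : IntegrableOn P.x' (Icc P.t1 P.t2) volume := by
    rw [integrableOn_Icc_iff_integrableOn_Ioc]; exact hx
  have hxcont : ContinuousOn P.x (Icc P.t1 P.t2) := by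
    have hprim : ContinuousOn (fun t => P.x P.t1 + ∫ q in Ioc P.t1 t, P.x' q)
        (Icc P.t1 P.t2) :=
      continuousOn_const.add (intervalIntegral.continuousOn_primitive hxIcc)
    refine hprim.congr ?_
    intro t ht
    rw [P.hxac t ht, intervalIntegral.integral_of_le ht.1]
  set G : ℝ → ℝ := fun q => ‖f (q, P.x q)‖ + ∑ j, ‖g j (q, P.x q)‖ with hG_def
  have hGcont : ContinuousOn G (Icc P.t1 P.t2) := by
    have hpair : ContinuousOn (fun q => (q, P.x q)) (Icc P.t1 P.t2) :=
      continuousOn_id.prodMk hxcont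
    exact ((hf.comp_continuousOn hpair).norm).add
      (continuousOn_finset_sum _ (fun j _ => ((hg j).comp_continuousOn hpair).norm))
  obtain ⟨M0, hM0⟩ := isCompact_Icc.exists_bound_of_continuousOn hGcont
  set M1 : ℝ := max M0 1 with hM1_def
  have hM1pos : (1:ℝ) ≤ M1 := le_max_right _ _
  have hGle : ∀ q ∈ Icc P.t1 P.t2, G q ≤ M1 := by
    intro q hq
    have h1 := hM0 q hq
    rw [Real.norm_eq_abs] at h1
    exact le_trans (le_trans (le_abs_self _) h1) (le_max_left _ _)
  have hx'bd : ∀ᵐ q ∂(volume : Measure ℝ), q ∈ Ioc P.t1 P.t2 →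
      ‖P.x' q‖ ≤ M1 * rho q := by
    filter_upwards [P.hode, hut_ae] with q hode hut hq
    have hqIcc : q ∈ Icc P.t1 P.t2 := Ioc_subset_Icc_self hq
    have h1 : ‖P.x' q‖ ≤ ‖f (q, P.x q)‖ + ∑ j, |P.u' q j| * ‖g j (q, P.x q)‖ := by
      rw [hode hqIcc]
      refine le_trans (norm_add_le _ _) (add_le_add le_rfl ?_)
      refine le_trans (norm_sum_le _ _) ?_
      refine Finset.sum_le_sum fun j _ => ?_
      rw [norm_smul, Real.norm_eq_abs]
    have h2 : ∑ j, |P.u' q j| * ‖g j (q, P.x q)‖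
        ≤ ‖P.u' q‖ * ∑ j, ‖g j (q, P.x q)‖ := by
      rw [Finset.mul_sum]
      exact Finset.sum_le_sum fun j _ =>
        mul_le_mul_of_nonneg_right (euclidean_coord_le_norm _ j) (norm_nonneg _)
    have hGq : G q = ‖f (q, P.x q)‖ + ∑ j, ‖g j (q, P.x q)‖ := rfl
    have hGq' := hGle q hqIcc
    rw [hGq] at hGq'
    have hsum_nn : (0:ℝ) ≤ ∑ j, ‖g j (q, P.x q)‖ :=
      Finset.sum_nonneg fun j _ => norm_nonneg _
    have hf_nn : (0:ℝ) ≤ ‖f (q, P.x q)‖ := norm_nonneg _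
    have h3 : ‖f (q, P.x q)‖ ≤ M1 := by linarith
    have h4 : ∑ j, ‖g j (q, P.x q)‖ ≤ M1 := by linarith
    have h5 : rho q = 1 + ‖P.u' q‖ := by
      have : rho q = 1 + ‖ut q‖ := rfl
      rw [this, hut hq]
    have h6 : ‖P.u' q‖ * ∑ j, ‖g j (q, P.x q)‖ ≤ ‖P.u' q‖ * M1 :=
      mul_le_mul_of_nonneg_left h4 (norm_nonneg _)
    rw [h5]
    nlinarith [norm_nonneg (P.u' q)]
  have hu'bd : ∀ᵐ q ∂(volume : Measure ℝ), q ∈ Ioc P.t1 P.t2 → ‖P.u' q‖ ≤ rho q := by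
    filter_upwards [hut_ae] with q hut hq
    have h5 : rho q = 1 + ‖P.u' q‖ := by
      have : rho q = 1 + ‖ut q‖ := rfl
      rw [this, hut hq]
    rw [h5]; linarith
  have hv'bd : ∀ᵐ q ∂(volume : Measure ℝ), q ∈ Ioc P.t1 P.t2 → ‖P.v' q‖ ≤ rho q := by
    filter_upwards [hut_ae, P.hvar] with q hut hvar hq
    have h5 : rho q = 1 + ‖P.u' q‖ := by
      have : rho q = 1 + ‖ut q‖ := rfl
      rw [this, hut hq]
    rw [hvar (Ioc_subset_Icc_self hq), h5, Real.norm_eq_abs,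
      abs_of_nonneg (norm_nonneg _)]
    linarith
  -- the key Lipschitz estimates
  have hkey : ∀ a b : ℝ, a ∈ Icc (0:ℝ) (sg P.t2) → b ∈ Icc (0:ℝ) (sg P.t2) → a ≤ b →
      ‖P.x (tau b) - P.x (tau a)‖ ≤ M1 * (b - a) ∧
      ‖P.v (tau b) - P.v (tau a)‖ ≤ b - a ∧
      ‖P.u (tau b) - P.u (tau a)‖ ≤ b - a := by
    intro a b ha hb hab
    have htt : tau a ≤ tau b := htaumono hab
    have ht : tau a ∈ Icc P.t1 P.t2 := htauIcc a ha
    have ht' : tau b ∈ Icc P.t1 P.t2 := htauIcc b hb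
    have hmem : ∀ {c : ℝ}, c ∈ Icc P.t1 P.t2 → c ∈ uIcc P.t1 P.t2 := by
      intro c hc; rw [uIcc_of_le P.ht.le]; exact hc
    have hsgdiff : (∫ q in (tau a)..(tau b), rho q) = b - a := by
      rw [← hsg_sub, hsg_tau, hsg_tau]
    have hrint : IntervalIntegrable rho volume (tau a) (tau b) := hrhoint _ _
    -- a.e. transfer to the restricted measure on [tau a, tau b]
    have hrestr : ∀ (b' : ℝ → ℝ)
        (_ : ∀ᵐ q ∂(volume : Measure ℝ), q ∈ Ioc P.t1 P.t2 → b' q ≤ M1 * rho q),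
        (fun q => b' q) ≤ᵐ[volume.restrict (Icc (tau a) (tau b))] fun q => M1 * rho q := by
      intro b' hb'
      filter_upwards [ae_restrict_of_ae hb', ae_restrict_mem measurableSet_Icc,
        ae_restrict_of_ae (hne P.t1)] with q hq1 hq2 hq3
      exact hq1 ⟨lt_of_le_of_ne (ht.1.trans hq2.1) (Ne.symm hq3), hq2.2.trans ht'.2⟩
    refine ⟨?_, ?_, ?_⟩
    · have hdx : P.x (tau b) - P.x (tau a) = ∫ q in (tau a)..(tau b), P.x' q :=
        diff_eq_integral P.hx'int P.hxac ht ht'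
      have hxint' : IntervalIntegrable P.x' volume (tau a) (tau b) :=
        P.hx'int.mono_set (uIcc_subset_uIcc (hmem ht) (hmem ht'))
      have hb1 : ‖∫ q in (tau a)..(tau b), P.x' q‖ ≤ ∫ q in (tau a)..(tau b), ‖P.x' q‖ :=
        intervalIntegral.norm_integral_le_integral_norm htt
      have hb2 : (∫ q in (tau a)..(tau b), ‖P.x' q‖)
          ≤ ∫ q in (tau a)..(tau b), M1 * rho q := by
        refine intervalIntegral.integral_mono_ae_restrict htt hxint'.norm
          (hrint.const_mul M1) (hrestr _ hx'bd)
      have hb3 : (∫ q in (tau a)..(tau b), M1 * rho q) = M1 * (b - a) := by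
        rw [intervalIntegral.integral_const_mul, hsgdiff]
      rw [hdx]
      exact le_trans hb1 (by rw [← hb3]; exact hb2)
    · have hdv : P.v (tau b) - P.v (tau a) = ∫ q in (tau a)..(tau b), P.v' q :=
        diff_eq_integral P.hv'int P.hvac ht ht'
      have hvint' : IntervalIntegrable P.v' volume (tau a) (tau b) :=
        P.hv'int.mono_set (uIcc_subset_uIcc (hmem ht) (hmem ht'))
      have hb1 : ‖∫ q in (tau a)..(tau b), P.v' q‖ ≤ ∫ q in (tau a)..(tau b), ‖P.v' q‖ :=
        intervalIntegral.norm_integral_le_integral_norm htt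
      have hb2 : (∫ q in (tau a)..(tau b), ‖P.v' q‖)
          ≤ ∫ q in (tau a)..(tau b), rho q := by
        refine intervalIntegral.integral_mono_ae_restrict htt hvint'.norm hrint ?_
        filter_upwards [ae_restrict_of_ae hv'bd, ae_restrict_mem measurableSet_Icc,
          ae_restrict_of_ae (hne P.t1)] with q hq1 hq2 hq3
        exact hq1 ⟨lt_of_le_of_ne (ht.1.trans hq2.1) (Ne.symm hq3), hq2.2.trans ht'.2⟩
      rw [hdv]
      exact le_trans hb1 (by rw [← hsgdiff]; exact hb2)
    · have hdu : P.u (tau b) - P.u (tau a) = ∫ q in (tau a)..(tau b), P.u' q :=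
        diff_eq_integral P.hu'int P.huac ht ht'
      have huint' : IntervalIntegrable P.u' volume (tau a) (tau b) :=
        P.hu'int.mono_set (uIcc_subset_uIcc (hmem ht) (hmem ht'))
      have hb1 : ‖∫ q in (tau a)..(tau b), P.u' q‖ ≤ ∫ q in (tau a)..(tau b), ‖P.u' q‖ :=
        intervalIntegral.norm_integral_le_integral_norm htt
      have hb2 : (∫ q in (tau a)..(tau b), ‖P.u' q‖)
          ≤ ∫ q in (tau a)..(tau b), rho q := by
        refine intervalIntegral.integral_mono_ae_restrict htt huint'.norm hrint ?_
        filter_upwards [ae_restrict_of_ae hu'bd, ae_restrict_mem measurableSet_Icc,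
          ae_restrict_of_ae (hne P.t1)] with q hq1 hq2 hq3
        exact hq1 ⟨lt_of_le_of_ne (ht.1.trans hq2.1) (Ne.symm hq3), hq2.2.trans ht'.2⟩
      rw [hdu]
      exact le_trans hb1 (by rw [← hsgdiff]; exact hb2)
  -- the Lipschitz property of the tuple
  have hlip : ∃ L : NNReal, LipschitzOnWith L
      (fun s => (tau s, P.x (tau s), P.v (tau s), tau s, P.u (tau s)))
      (Icc (0:ℝ) (sg P.t2)) := by
    refine ⟨Real.toNNReal M1, ?_⟩
    rw [lipschitzOnWith_iff_dist_le_mul]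
    have hcoe : (Real.toNNReal M1 : ℝ) = M1 :=
      Real.coe_toNNReal _ (le_trans zero_le_one hM1pos)
    have main : ∀ a b : ℝ, a ∈ Icc (0:ℝ) (sg P.t2) → b ∈ Icc (0:ℝ) (sg P.t2) → a ≤ b →
        dist (tau b, P.x (tau b), P.v (tau b), tau b, P.u (tau b))
          (tau a, P.x (tau a), P.v (tau a), tau a, P.u (tau a))
          ≤ (Real.toNNReal M1 : ℝ) * dist b a := by
      intro a b ha hb hab
      obtain ⟨k1, k2, k3⟩ := hkey a b ha hb hab
      have htmono : tau a ≤ tau b := htaumono hab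
      have htd : |tau b - tau a| ≤ b - a := by
        rw [abs_of_nonneg (by linarith)]
        exact htaulip a b hab
      have hdist : dist b a = b - a := by
        rw [Real.dist_eq, abs_of_nonneg (by linarith)]
      rw [hcoe, hdist]
      have hba : (0:ℝ) ≤ b - a := by linarith
      have hM1ba : b - a ≤ M1 * (b - a) := le_mul_of_one_le_left hba hM1pos
      simp only [Prod.dist_eq]
      refine max_le ?_ (max_le ?_ (max_le ?_ (max_le ?_ ?_)))
      · rw [Real.dist_eq]; exact le_trans htd hM1ba
      · rw [dist_eq_norm]; exact k1
      · rw [Real.dist_eq]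
        rw [Real.norm_eq_abs] at k2
        exact le_trans k2 hM1ba
      · rw [Real.dist_eq]; exact le_trans htd hM1ba
      · rw [dist_eq_norm]; exact le_trans k3 hM1ba
    intro s hs s' hs'
    rcases le_total s s' with h | h
    · have h2 := main s s' hs hs' h
      rw [dist_comm (α := ℝ × En n × ℝ × ℝ × En m), dist_comm (α := ℝ) s s']
      exact h2
    · exact main s' s hs' hs h
  -- almost-everywhere equations
  have hinv_nn : ∀ q : ℝ, (0:ℝ) ≤ (rho q)⁻¹ := fun q => inv_nonneg.2 (hrhopos q).le
  have heqnu : ∀ s : ℝ, Fn (tau s) = ‖Fp (tau s)‖ := by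
    intro s
    have h1 : Fp (tau s) = (rho (tau s))⁻¹ • ut (tau s) := rfl
    have h2 : Fn (tau s) = (rho (tau s))⁻¹ * ‖ut (tau s)‖ := rfl
    rw [h1, h2, norm_smul, Real.norm_eq_abs, abs_of_nonneg (hinv_nn _)]
  have heqy : ∀ᵐ s ∂(volume : Measure ℝ), s ∈ Icc (0:ℝ) (sg P.t2) →
      Fy (tau s) = F0 (tau s) • f (tau s, P.x (tau s)) +
        ∑ j, Fp (tau s) j • g j (tau s, P.x (tau s)) := by
    filter_upwards [hnull _ P.hode, hnull _ hut_ae, hnull _ hxt_ae, hne 0]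
      with s hode hut hxt hs0 hs
    have htio : tau s ∈ Ioc P.t1 P.t2 := htauIoc s hs hs0
    have hticc : tau s ∈ Icc P.t1 P.t2 := Ioc_subset_Icc_self htio
    have h1 : Fy (tau s) = (rho (tau s))⁻¹ • xt (tau s) := rfl
    rw [h1, hxt htio, hode hticc, smul_add, Finset.smul_sum]
    congr 1
    refine Finset.sum_congr rfl fun j _ => ?_
    rw [smul_smul]
    congr 1
    have h2 : Fp (tau s) = (rho (tau s))⁻¹ • ut (tau s) := rfl
    rw [h2, hut htio, PiLp.smul_apply, smul_eq_mul]
  have hconeQ : ∀ᵐ s ∂(volume : Measure ℝ), s ∈ Icc (0:ℝ) (sg P.t2) →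
      0 ≤ F0 (tau s) ∧ Fp (tau s) ∈ C ∧ F0 (tau s) + ‖Fp (tau s)‖ = 1 := by
    filter_upwards [hnull _ P.hcone, hnull _ hut_ae, hne 0] with s hcone hut hs0 hs
    have htio : tau s ∈ Ioc P.t1 P.t2 := htauIoc s hs hs0
    have hticc : tau s ∈ Icc P.t1 P.t2 := Ioc_subset_Icc_self htio
    refine ⟨hinv_nn _, ?_, ?_⟩
    · have h2 : Fp (tau s) = (rho (tau s))⁻¹ • ut (tau s) := rfl
      rw [h2, hut htio]
      exact hCsc _ (hinv_nn _) _ (hcone hticc)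
    · have h2 : Fp (tau s) = (rho (tau s))⁻¹ • ut (tau s) := rfl
      have h3 : F0 (tau s) = (rho (tau s))⁻¹ := rfl
      rw [h2, h3, norm_smul, Real.norm_eq_abs, abs_of_nonneg (hinv_nn _)]
      have h4 : rho (tau s) = 1 + ‖ut (tau s)‖ := rfl
      have h5 : rho (tau s) ≠ 0 := (hrhopos _).ne'
      rw [h4]
      field_simp
  -- assemble the extended process
  refine ⟨{ S := sg P.t2, hS := hSpos,
            y0 := tau, y := fun s => P.x (tau s), nu := fun s => P.v (tau s),
            phi0 := tau, phi := fun s => P.u (tau s),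
            y0' := fun s => F0 (tau s), y' := fun s => Fy (tau s), nu' := fun s => Fn (tau s),
            phi0' := fun s => F0 (tau s), phi' := fun s => Fp (tau s),
            lip := hlip,
            hy0int := hy0int, hyint := hyint, hnuint := hnuint, hphi0int := hy0int,
            hphiint := hphiint,
            hy0ac := ?_, hyac := ?_, hnuac := ?_, hphi0ac := ?_, hphiac := ?_,
            heqy0 := Filter.Eventually.of_forall fun s _ => rfl,
            heqy := by
              filter_upwards [heqy] with s h hs
              exact h hs,
            heqnu := Filter.Eventually.of_forall fun s _ => heqnu s,
            hcone := by
              filter_upwards [hconeQ] with s h hs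
              exact h hs,
            hyconstl := ?_, hyconstr := ?_, hnuconstl := ?_, hnuconstr := ?_ }, ?_, ?_, ?_, ?_, ?_, ?_⟩
  · -- hy0ac
    intro s hs
    show tau s = tau 0 + ∫ r in (0:ℝ)..s, F0 (tau r)
    rw [hac0 s hs, htau0]
    ring
  · -- hyac
    intro s hs
    show P.x (tau s) = P.x (tau 0) + ∫ r in (0:ℝ)..s, Fy (tau r)
    rw [hacy s hs, htau0]
    exact P.hxac (tau s) (htauIcc s hs)
  · -- hnuac
    intro s hs
    show P.v (tau s) = P.v (tau 0) + ∫ r in (0:ℝ)..s, Fn (tau r)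
    rw [hacn s hs, htau0]
    exact P.hvac (tau s) (htauIcc s hs)
  · -- hphi0ac
    intro s hs
    show tau s = tau 0 + ∫ r in (0:ℝ)..s, F0 (tau r)
    rw [hac0 s hs, htau0]
    ring
  · -- hphiac
    intro s hs
    show P.u (tau s) = P.u (tau 0) + ∫ r in (0:ℝ)..s, Fp (tau r)
    rw [hacp s hs, htau0]
    exact P.huac (tau s) (htauIcc s hs)
  · -- hyconstl
    intro s hs
    show P.x (tau s) = P.x (tau 0)
    rw [htau0, P.hxconstl (tau s) (by rw [← htau0]; exact htaumono hs)]
  · -- hyconstr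
    intro s hs
    show P.x (tau s) = P.x (tau (sg P.t2))
    rw [htauS, P.hxconstr (tau s) (by rw [← htauS]; exact htaumono hs)]
  · -- hnuconstl
    intro s hs
    show P.v (tau s) = P.v (tau 0)
    rw [htau0, P.hvconstl (tau s) (by rw [← htau0]; exact htaumono hs)]
  · -- hnuconstr
    intro s hs
    show P.v (tau s) = P.v (tau (sg P.t2))
    rw [htauS, P.hvconstr (tau s) (by rw [← htauS]; exact htaumono hs)]
  · exact htau0
  · show P.x (tau 0) = P.x P.t1; rw [htau0]
  · show P.v (tau 0) = P.v P.t1; rw [htau0]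
  · exact htauS
  · show P.x (tau (sg P.t2)) = P.x P.t2; rw [htauS]
  · show P.v (tau (sg P.t2)) = P.v P.t2; rw [htauS]





end Aux

/-- Under hypothesis (H1), if there exists an extended sense `L^∞`
(global) minimizer for `(P_e)` which is not isolated, then there is no infimum gap. -/
theorem no_infimum_gap_of_not_isolated_minimizer
    {n m : ℕ} (C : Set (En m)) (K : EReal) (T : Set (ℝ × En n × ℝ × En n))
    (f : ℝ × En n → En n) (g : Fin m → ℝ × En n → En n)
    (h : ℝ × En n × ℝ × En n × ℝ → ℝ)
    (hC : IsClosedConvexCone C) (hT : IsClosed T) (hK : (0 : EReal) < K)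
    (hH1 : HypH1 f g h)
    (Qbar : ExtProcess n m C f g)
    (hmin : ExtGlobalMin K T h Qbar)
    (hniso : ¬ IsolatedProcess K T Qbar) :
    NoInfGap C f g K T h := by
  classical
  -- continuity of the data
  have hfc : Continuous f := hH1.1.1.continuous
  have hgc : ∀ j, Continuous (g j) := fun j => (hH1.1.2.1 j).continuous
  have hhc : Continuous h := hH1.2.1.continuous
  set Eset : Set ℝ := {c : ℝ | ∃ Q : ExtProcess n m C f g, ExtFeasible K T Q ∧ Jext h Q = c}
    with hEset
  set Sset : Set ℝ := {c : ℝ | ∃ P : StrictProcess n m C f g, StrictFeasible K T P ∧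
    Jstrict h P = c} with hSset
  -- non-isolation, unpacked
  have hni : ∀ δ > (0:ℝ), ∃ (P : StrictProcess n m C f g) (Q : ExtProcess n m C f g),
      IsEmbedding P Q ∧ ExtFeasible K T Q ∧ dExt Q Qbar < δ := by
    intro δ hδ
    by_contra hcon
    exact hniso ⟨δ, hδ, hcon⟩
  -- every strict feasible cost is at least the minimum extended cost
  have hSlb : ∀ c ∈ Sset, Jext h Qbar ≤ c := by
    rintro c ⟨P, hP, rfl⟩
    obtain ⟨Q, e1, e2, e3, e4, e5, e6⟩ := exists_ext_of_strict hC hfc hgc P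
    have hQfeas : ExtFeasible K T Q := by
      refine ⟨?_, ?_, ?_⟩
      · rw [e3]; exact hP.1
      · rw [e6]; exact hP.2.1
      · rw [e1, e2, e4, e5]; exact hP.2.2
    have : Jext h Q = Jstrict h P := by
      simp [Jext, Jstrict, endptExt, e1, e2, e3, e4, e5, e6]
    rw [← this]
    exact hmin.2 Q hQfeas
  have hSne : Sset.Nonempty := by
    obtain ⟨P, Q, hPQ, hQf, -⟩ := hni 1 one_pos
    exact ⟨Jstrict h P, P, strictFeasible_of_embedding hPQ hQf, rfl⟩
  have hSbdd : BddBelow Sset := ⟨Jext h Qbar, hSlb⟩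
  -- the extended infimum is the minimum value
  have hE : sInf Eset = Jext h Qbar := by
    apply le_antisymm
    · exact csInf_le ⟨Jext h Qbar, by rintro c ⟨Q, hQ, rfl⟩; exact hmin.2 Q hQ⟩
        ⟨Qbar, hmin.1, rfl⟩
    · exact le_csInf ⟨Jext h Qbar, Qbar, hmin.1, rfl⟩ (by rintro c ⟨Q, hQ, rfl⟩; exact hmin.2 Q hQ)
  -- the strict infimum equals the minimum extended cost
  have hSup : sInf Sset ≤ Jext h Qbar := by
    by_contra hcon
    push_neg at hcon
    set ε := sInf Sset - Jext h Qbar with hε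
    have hεpos : 0 < ε := by simp [hε]; linarith
    obtain ⟨δ, hδpos, hδ⟩ := Metric.continuousAt_iff.1 hhc.continuousAt ε hεpos
    obtain ⟨P, Q, hPQ, hQf, hd⟩ := hni δ hδpos
    have hPfeas : StrictFeasible K T P := strictFeasible_of_embedding hPQ hQf
    have hmem : Jstrict h P ∈ Sset := ⟨P, hPfeas, rfl⟩
    have hdist : dist (endptExt Q) (endptExt Qbar) < δ :=
      lt_of_le_of_lt (dist_endptExt_le_dExt Q Qbar) hd
    have hJ : dist (h (endptExt Q)) (h (endptExt Qbar)) < ε := hδ hdist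
    have hJ' : Jext h Q < Jext h Qbar + ε := by
      rw [Real.dist_eq] at hJ
      have := abs_lt.1 hJ
      simp only [Jext]
      linarith [this.1, this.2]
    have : sInf Sset ≤ Jstrict h P := csInf_le hSbdd hmem
    rw [← jext_eq_jstrict_of_embedding hPQ] at this
    rw [hε] at hJ'
    linarith
  have hSdown : Jext h Qbar ≤ sInf Sset := le_csInf hSne hSlb
  show sInf Eset = sInf Sset
  rw [hE]
  linarith
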